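/- Let w₂ = (a₂,b₂,c₂) and w₃ = (a₃,b₃,c₃) be ℝ-linearly independent primitive vectors in ℤ≥0³, and let μ₁ = gcd(|b₂c₃−b₃c₂|, |a₂c₃−a₃c₂|, |a₂b₃−a₃b₂|). Then gcd(a₂, μ₁) = gcd(a₃, μ₁); similarly gcd(b₂, μ₁) = gcd(b₃, μ₁) and gcd(c₂, μ₁) = gcd(c₃, μ₁). -/

import Mathlib

lemma gcd_mu_aux (x₂ y₂ z₂ x₃ y₃ z₃ : ℤ) (μ : ℕ)
    (hprim : Int.gcd x₂ (Int.gcd y₂ z₂) = 1)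
    (h1 : (μ : ℤ) ∣ x₂ * y₃ - x₃ * y₂) (h2 : (μ : ℤ) ∣ x₂ * z₃ - x₃ * z₂) :
    (Int.gcd x₂ (μ : ℤ) : ℤ) ∣ x₃ := by
  set d : ℤ := (Int.gcd x₂ (μ : ℤ) : ℤ) with hd
  have hdx : d ∣ x₂ := (Int.gcd_dvd_left _ _)
  have hdμ : d ∣ (μ : ℤ) := (Int.gcd_dvd_right _ _)
  have h3 : d ∣ x₃ * y₂ := by
    have := dvd_sub (hdx.mul_right y₃) (hdμ.trans h1)
    simpa using this
  have h4 : d ∣ x₃ * z₂ := by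
    have := dvd_sub (hdx.mul_right z₃) (hdμ.trans h2)
    simpa using this
  have h5 : d ∣ (Int.gcd (x₃ * y₂) (x₃ * z₂) : ℤ) := Int.dvd_coe_gcd h3 h4
  rw [Int.gcd_mul_left] at h5
  have hco : IsCoprime x₂ ((Int.gcd y₂ z₂ : ℕ) : ℤ) := by
    rw [Int.isCoprime_iff_gcd_eq_one]
    simpa using hprim
  have hco' : IsCoprime d ((Int.gcd y₂ z₂ : ℕ) : ℤ) := hco.of_isCoprime_of_dvd_left hdx
  have h6 : d ∣ (x₃.natAbs : ℤ) := hco'.dvd_of_dvd_mul_right (by push_cast at h5 ⊢; exact h5)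
  exact h6.trans (Int.natAbs_dvd.mpr dvd_rfl)

lemma gcd3_swap (a b c : ℤ) : Int.gcd b (Int.gcd a c) = Int.gcd a (Int.gcd b c) := by
  simp only [Int.gcd, Int.natAbs_natCast]
  rw [← Nat.gcd_assoc, Nat.gcd_comm b.natAbs, Nat.gcd_assoc]

lemma gcd3_rot (a b c : ℤ) : Int.gcd c (Int.gcd a b) = Int.gcd a (Int.gcd b c) := by
  simp only [Int.gcd, Int.natAbs_natCast]
  rw [Nat.gcd_comm, ← Nat.gcd_assoc]

/-- Let `w₂ = (a₂,b₂,c₂)` and `w₃ = (a₃,b₃,c₃)` be ℝ-linearly independent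
primitive vectors in `ℤ≥0³`, and let
`μ₁ = gcd(|b₂c₃−b₃c₂|, |a₂c₃−a₃c₂|, |a₂b₃−a₃b₂|)`.
Then `gcd(a₂, μ₁) = gcd(a₃, μ₁)`, `gcd(b₂, μ₁) = gcd(b₃, μ₁)` and `gcd(c₂, μ₁) = gcd(c₃, μ₁)`. -/
theorem gcd_coordinates_with_mu1 (a₂ b₂ c₂ a₃ b₃ c₃ : ℤ)
    (ha₂ : 0 ≤ a₂) (hb₂ : 0 ≤ b₂) (hc₂ : 0 ≤ c₂)
    (ha₃ : 0 ≤ a₃) (hb₃ : 0 ≤ b₃) (hc₃ : 0 ≤ c₃)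
    (hprim₂ : Int.gcd a₂ (Int.gcd b₂ c₂) = 1)
    (hprim₃ : Int.gcd a₃ (Int.gcd b₃ c₃) = 1)
    (hli : LinearIndependent ℝ ![![(a₂ : ℝ), (b₂ : ℝ), (c₂ : ℝ)], ![(a₃ : ℝ), (b₃ : ℝ), (c₃ : ℝ)]])
    (μ₁ : ℕ)
    (hμ₁ : μ₁ = Int.gcd (b₂ * c₃ - b₃ * c₂) (Int.gcd (a₂ * c₃ - a₃ * c₂) (a₂ * b₃ - a₃ * b₂))) :
    Int.gcd a₂ (μ₁ : ℤ) = Int.gcd a₃ (μ₁ : ℤ) ∧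
    Int.gcd b₂ (μ₁ : ℤ) = Int.gcd b₃ (μ₁ : ℤ) ∧
    Int.gcd c₂ (μ₁ : ℤ) = Int.gcd c₃ (μ₁ : ℤ) := by
  have houter : (μ₁ : ℤ) ∣ ((Int.gcd (a₂ * c₃ - a₃ * c₂) (a₂ * b₃ - a₃ * b₂) : ℕ) : ℤ) := by
    rw [hμ₁]; exact (Int.gcd_dvd_right _ _)
  have hX : (μ₁ : ℤ) ∣ b₂ * c₃ - b₃ * c₂ := by
    rw [hμ₁]; exact (Int.gcd_dvd_left _ _)
  have hY : (μ₁ : ℤ) ∣ a₂ * c₃ - a₃ * c₂ :=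
    houter.trans (Int.gcd_dvd_left _ _)
  have hZ : (μ₁ : ℤ) ∣ a₂ * b₃ - a₃ * b₂ :=
    houter.trans (Int.gcd_dvd_right _ _)
  have hX' : (μ₁ : ℤ) ∣ b₃ * c₂ - b₂ * c₃ := by
    rw [show b₃ * c₂ - b₂ * c₃ = -(b₂ * c₃ - b₃ * c₂) by ring]; exact dvd_neg.mpr hX
  have hY' : (μ₁ : ℤ) ∣ a₃ * c₂ - a₂ * c₃ := by
    rw [show a₃ * c₂ - a₂ * c₃ = -(a₂ * c₃ - a₃ * c₂) by ring]; exact dvd_neg.mpr hY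
  have hZ' : (μ₁ : ℤ) ∣ a₃ * b₂ - a₂ * b₃ := by
    rw [show a₃ * b₂ - a₂ * b₃ = -(a₂ * b₃ - a₃ * b₂) by ring]; exact dvd_neg.mpr hZ
  have hZc : (μ₁ : ℤ) ∣ b₂ * a₃ - b₃ * a₂ := by
    rw [show b₂ * a₃ - b₃ * a₂ = a₃ * b₂ - a₂ * b₃ by ring]; exact hZ'
  have hZc' : (μ₁ : ℤ) ∣ b₃ * a₂ - b₂ * a₃ := by
    rw [show b₃ * a₂ - b₂ * a₃ = a₂ * b₃ - a₃ * b₂ by ring]; exact hZ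
  have hYc : (μ₁ : ℤ) ∣ c₂ * a₃ - c₃ * a₂ := by
    rw [show c₂ * a₃ - c₃ * a₂ = a₃ * c₂ - a₂ * c₃ by ring]; exact hY'
  have hYc' : (μ₁ : ℤ) ∣ c₃ * a₂ - c₂ * a₃ := by
    rw [show c₃ * a₂ - c₂ * a₃ = a₂ * c₃ - a₃ * c₂ by ring]; exact hY
  have hXc : (μ₁ : ℤ) ∣ c₂ * b₃ - c₃ * b₂ := by
    rw [show c₂ * b₃ - c₃ * b₂ = -(b₂ * c₃ - b₃ * c₂) by ring]; exact dvd_neg.mpr hX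
  have hXc' : (μ₁ : ℤ) ∣ c₃ * b₂ - c₂ * b₃ := by
    rw [show c₃ * b₂ - c₂ * b₃ = b₂ * c₃ - b₃ * c₂ by ring]; exact hX
  have hb₂' : Int.gcd b₂ (Int.gcd a₂ c₂) = 1 := by rw [gcd3_swap]; exact hprim₂
  have hb₃' : Int.gcd b₃ (Int.gcd a₃ c₃) = 1 := by rw [gcd3_swap]; exact hprim₃
  have hc₂' : Int.gcd c₂ (Int.gcd a₂ b₂) = 1 := by rw [gcd3_rot]; exact hprim₂
  have hc₃' : Int.gcd c₃ (Int.gcd a₃ b₃) = 1 := by rw [gcd3_rot]; exact hprim₃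
  refine ⟨?_, ?_, ?_⟩
  · exact Nat.dvd_antisymm
      (Int.natCast_dvd_natCast.mp (Int.dvd_coe_gcd
        (gcd_mu_aux a₂ b₂ c₂ a₃ b₃ c₃ μ₁ hprim₂ hZ hY) (Int.gcd_dvd_right _ _)))
      (Int.natCast_dvd_natCast.mp (Int.dvd_coe_gcd
        (gcd_mu_aux a₃ b₃ c₃ a₂ b₂ c₂ μ₁ hprim₃ hZ' hY') (Int.gcd_dvd_right _ _)))
  · exact Nat.dvd_antisymm
      (Int.natCast_dvd_natCast.mp (Int.dvd_coe_gcd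
        (gcd_mu_aux b₂ a₂ c₂ b₃ a₃ c₃ μ₁ hb₂' hZc hX) (Int.gcd_dvd_right _ _)))
      (Int.natCast_dvd_natCast.mp (Int.dvd_coe_gcd
        (gcd_mu_aux b₃ a₃ c₃ b₂ a₂ c₂ μ₁ hb₃' hZc' hX') (Int.gcd_dvd_right _ _)))
  · exact Nat.dvd_antisymm
      (Int.natCast_dvd_natCast.mp (Int.dvd_coe_gcd
        (gcd_mu_aux c₂ a₂ b₂ c₃ a₃ b₃ μ₁ hc₂' hYc hXc) (Int.gcd_dvd_right _ _)))
      (Int.natCast_dvd_natCast.mp (Int.dvd_coe_gcd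
        (gcd_mu_aux c₃ a₃ b₃ c₂ a₂ b₂ μ₁ hc₃' hYc' hXc') (Int.gcd_dvd_right _ _)))
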